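/- Let Σ be a finite set with quiescent state q, r ≥ 2, and δ : Σ^r → ℂ^Σ the local rule of a simple LQCA A (neighborhood an interval of length r). Define the weighted de Bruijn graph G_A with vertex set Σ^{r−1}, edges (xz, zy) for x,y ∈ Σ, z ∈ Σ^{r−2}, and weight w(xz, zy) = ‖δ(xzy)‖. Then every column U_A(·,c) of the time evolution operator has unit norm if and only if every cycle in G_A starting and ending at the vertex q^{r−1} has total weight (product of edge weights along the cycle) equal to 1. -/

import Mathlib

section Aux
variable {S : Type*} [Fintype S] [DecidableEq S]

private lemma sq_norm_eq' (x : EuclideanSpace ℂ S) : ‖x‖ ^ 2 = ∑ s, ‖x s‖ ^ 2 := by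
  rw [EuclideanSpace.norm_eq, Real.sq_sqrt]
  positivity

private lemma norm_delta_q' (q : S) (m : ℕ) (δ : (Fin (m + 2) → S) → EuclideanSpace ℂ S)
    (hq : ∀ x, δ (fun _ => q) x = if x = q then 1 else 0) :
    ‖δ (fun _ => q)‖ = 1 := by
  have h : ‖δ (fun _ => q)‖ ^ 2 = 1 := by
    rw [sq_norm_eq']
    have h2 : ∀ s : S, ‖δ (fun _ => q) s‖ ^ 2 = if s = q then 1 else 0 := by
      intro s; rw [hq]; by_cases h : s = q <;> simp [h]
    rw [Finset.sum_congr rfl (fun s _ => h2 s), Finset.sum_ite_eq' _ q (fun _ => (1:ℝ))]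
    simp
  nlinarith [norm_nonneg (δ (fun _ => q))]

private lemma prod_Icc_int' {M : Type*} [CommMonoid M] (a : ℤ) (k : ℕ) (f : ℤ → M) :
    ∏ t ∈ Finset.Icc a (a + k - 1), f t = ∏ i ∈ Finset.range k, f (a + i) := by
  have himg : Finset.Icc a (a + k - 1) = (Finset.range k).image (fun i : ℕ => a + i) := by
    ext t
    simp only [Finset.mem_Icc, Finset.mem_image, Finset.mem_range]
    constructor
    · intro ht
      exact ⟨(t - a).toNat, by omega, by omega⟩
    · rintro ⟨i, hi, rfl⟩
      omega
  rw [himg, Finset.prod_image (by intro i _ j _ h; have h' : a + (i : ℤ) = a + (j : ℤ) := h; omega)]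

private lemma column_norm' (q : S) (m : ℕ) (δ : (Fin (m + 2) → S) → EuclideanSpace ℂ S)
    (hq : ∀ x, δ (fun _ => q) x = if x = q then 1 else 0)
    (c : ℤ → S) (I : Finset ℤ)
    (hI : ∀ i ∉ I, ∀ j : Fin (m + 2), c (i + (j : ℤ)) = q) :
    Real.sqrt (∑' d : {c : ℤ → S // {i | c i ≠ q}.Finite},
        ‖∏ᶠ i : ℤ, δ (fun j => c (i + (j : ℤ))) (d.1 i)‖ ^ 2)
      = ∏ i ∈ I, ‖δ (fun j => c (i + (j : ℤ)))‖ := by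
  classical
  set W : ℤ → Fin (m + 2) → S := fun i j => c (i + (j : ℤ)) with hW
  have hWq : ∀ i ∉ I, W i = fun _ => q := fun i hi => funext (hI i hi)
  set g : ((↥I) → S) → {c : ℤ → S // {i | c i ≠ q}.Finite} :=
    fun d => ⟨fun i => if h : i ∈ I then d ⟨i, h⟩ else q,
      Set.Finite.subset I.finite_toSet (fun i hi => by
        by_contra h
        simp only [Set.mem_setOf_eq] at hi
        rw [dif_neg (by simpa using h)] at hi
        exact hi rfl)⟩ with hg
  have hginj : Function.Injective g := by
    intro d1 d2 h
    funext i
    have h2 := congrFun (congrArg Subtype.val h) i.1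
    simpa [hg, dif_pos i.2] using h2
  have hzero : ∀ b ∉ Finset.image g Finset.univ,
      ‖∏ᶠ i : ℤ, δ (W i) (b.1 i)‖ ^ 2 = 0 := by
    intro b hb
    have hex : ∃ i, i ∉ I ∧ b.1 i ≠ q := by
      by_contra h
      push_neg at h
      apply hb
      refine Finset.mem_image.2 ⟨fun i => b.1 i.1, Finset.mem_univ _, ?_⟩
      apply Subtype.ext
      funext i
      by_cases hi : i ∈ I
      · simp [hg, dif_pos hi]; exact fun h' => absurd hi h'
      · simp [hg, dif_neg hi, h i hi]
    obtain ⟨i0, hi0, hbi0⟩ := hex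
    have hprod : ∏ᶠ i : ℤ, δ (W i) (b.1 i) = 0 := by
      have hsub : Function.mulSupport (fun i => δ (W i) (b.1 i)) ⊆
          ↑(I ∪ b.2.toFinset) := by
        intro i hi
        simp only [Finset.coe_union, Set.mem_union, Finset.mem_coe,
          Set.Finite.coe_toFinset, Set.mem_setOf_eq]
        by_contra hc
        push_neg at hc
        obtain ⟨h1, h2⟩ := hc
        apply hi
        have hb2 : b.1 i = q := by simpa using h2
        show δ (W i) (b.1 i) = 1
        rw [hWq i h1, hq, hb2, if_pos rfl]
      rw [finprod_eq_prod_of_mulSupport_subset _ hsub]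
      refine Finset.prod_eq_zero (i := i0) ?_ ?_
      · simp only [Finset.mem_union, Set.Finite.mem_toFinset, Set.mem_setOf_eq]
        exact Or.inr hbi0
      · rw [hWq i0 hi0, hq, if_neg hbi0]
    rw [hprod, norm_zero]
    ring
  have hval : ∀ d : (↥I) → S,
      ‖∏ᶠ i : ℤ, δ (W i) ((g d).1 i)‖ ^ 2 = ∏ i ∈ I.attach, ‖δ (W i.1) (d i)‖ ^ 2 := by
    intro d
    have hsub : Function.mulSupport (fun i => δ (W i) ((g d).1 i)) ⊆ ↑I := by
      intro i hi
      by_contra hc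
      apply hi
      have hc' : i ∉ I := by simpa using hc
      have hgq : (g d).1 i = q := by simp only [hg]; exact dif_neg hc'
      show δ (W i) ((g d).1 i) = 1
      rw [hWq i hc', hq, hgq, if_pos rfl]
    rw [finprod_eq_prod_of_mulSupport_subset _ hsub, norm_prod, ← Finset.prod_pow,
      ← Finset.prod_attach]
    refine Finset.prod_congr rfl fun i _ => ?_
    exact congrArg (fun s => ‖δ (W i.1) s‖ ^ 2) (dif_pos i.2)
  have hts : (∑' d : {c : ℤ → S // {i | c i ≠ q}.Finite},
      ‖∏ᶠ i : ℤ, δ (W i) (d.1 i)‖ ^ 2) = (∏ i ∈ I, ‖δ (W i)‖) ^ 2 := by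
    rw [tsum_eq_sum hzero, Finset.sum_image (fun a _ b _ h => hginj h)]
    calc (∑ d : (↥I) → S, ‖∏ᶠ i : ℤ, δ (W i) ((g d).1 i)‖ ^ 2)
        = ∑ d : (↥I) → S, ∏ i ∈ I.attach, ‖δ (W i.1) (d i)‖ ^ 2 :=
          Finset.sum_congr rfl fun d _ => hval d
      _ = ∏ i ∈ I.attach, ∑ s : S, ‖δ (W i.1) s‖ ^ 2 := by
          rw [Finset.attach_eq_univ, ← Finset.sum_prod_piFinset Finset.univ
            (fun (i : ↥I) (s : S) => ‖δ (W i.1) s‖ ^ 2), Fintype.piFinset_univ]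
      _ = ∏ i ∈ I.attach, ‖δ (W i.1)‖ ^ 2 :=
          Finset.prod_congr rfl fun i _ => (sq_norm_eq' _).symm
      _ = ∏ i ∈ I, ‖δ (W i)‖ ^ 2 := Finset.prod_attach I (fun x => ‖δ (W x)‖ ^ 2)
      _ = (∏ i ∈ I, ‖δ (W i)‖) ^ 2 := Finset.prod_pow _ _ _
  rw [hts, Real.sqrt_sq (Finset.prod_nonneg fun _ _ => norm_nonneg _)]

end Aux

theorem unit_columns_iff_qcycles_weight_one {S : Type*} [Fintype S] [DecidableEq S]
    (q : S) (m : ℕ) (δ : (Fin (m + 2) → S) → EuclideanSpace ℂ S)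
    (hq : ∀ x, δ (fun _ => q) x = if x = q then 1 else 0) :
    (∀ c : {c : ℤ → S // {i | c i ≠ q}.Finite},
        Real.sqrt (∑' d : {c : ℤ → S // {i | c i ≠ q}.Finite},
            ‖∏ᶠ i : ℤ, δ (fun j => c.1 (i + (j : ℤ))) (d.1 i)‖ ^ 2) = 1)
      ↔ ∀ (k : ℕ) (p : Fin (k + 1) → (Fin (m + 1) → S)),
          1 ≤ k →
          p 0 = (fun _ => q) →
          p (Fin.last k) = (fun _ => q) →
          (∀ i : Fin k, ∀ j : Fin m,
              p i.castSucc j.succ = p i.succ j.castSucc) →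
          (∏ i : Fin k,
              ‖δ (Fin.snoc (p i.castSucc) (p i.succ (Fin.last m)))‖) = 1 := by
  constructor
  · -- unit columns ⇒ cycles have weight one
    intro hcol k p hk h0 hl hcpt
    set c : ℤ → S := fun t =>
      if h : 0 ≤ t ∧ t < (k : ℤ) then p ⟨t.toNat + 1, by omega⟩ (Fin.last m) else q with hc
    have hcq : ∀ t : ℤ, (t < 0 ∨ (k : ℤ) ≤ t) → c t = q := by
      intro t ht
      simp only [hc]
      rw [dif_neg (by omega)]
    have hcval : ∀ t : ℤ, ∀ h : 0 ≤ t ∧ t < (k : ℤ),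
        c t = p ⟨t.toNat + 1, by omega⟩ (Fin.last m) := by
      intro t h
      simp only [hc]
      rw [dif_pos h]
    have hfin : {i | c i ≠ q}.Finite := by
      refine Set.Finite.subset (Set.finite_Icc (0 : ℤ) k) (fun t ht => ?_)
      simp only [Set.mem_setOf_eq] at ht
      simp only [Set.mem_Icc]
      by_contra hco
      exact ht (hcq t (by omega))
    have hform : ∀ i : Fin (k + 1), ∀ j : Fin (m + 1),
        p i j = c ((i : ℤ) + (j : ℤ) - (m + 1)) := by
      intro i
      induction i using Fin.induction with
      | zero =>
          intro j
          have hj := j.isLt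
          have h0' : ((0 : Fin (k + 1)) : ℤ) = 0 := by simp
          rw [h0, h0']
          exact (hcq _ (Or.inl (by omega))).symm
      | succ i ih =>
          intro j
          induction j using Fin.lastCases with
          | last =>
              have hi := i.isLt
              have h5 : p i.succ (Fin.last m)
                  = c (i : ℤ) := by
                rw [hcval (i : ℤ) ⟨Int.natCast_nonneg _, by exact_mod_cast hi⟩]
                congr 1
              rw [h5]
              congr 1
              simp only [Fin.val_succ, Fin.val_last]
              omega
          | cast j' =>
              rw [← hcpt i j', ih j'.succ]
              congr 1
              simp only [Fin.val_succ, Fin.coe_castSucc]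
              omega
    have hctail : ∀ s : ℤ, (k : ℤ) - (m + 1) ≤ s → c s = q := by
      intro s hs
      by_cases hsk : (k : ℤ) ≤ s
      · exact hcq s (Or.inr hsk)
      · have hk0 : 0 ≤ (k : ℤ) := Int.natCast_nonneg _
        have := hform (Fin.last k) ⟨(s - k + m + 1).toNat, by omega⟩
        simp only [hl] at this
        rw [this]
        congr 1
        simp only [Fin.val_last, Fin.val_mk]
        omega
    have hcolc := hcol ⟨c, hfin⟩
    rw [column_norm' q m δ hq c (Finset.Icc (-(m + 1 : ℤ)) ((k : ℤ) - 1))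
      (by
        intro t ht j
        have hj := j.isLt
        rw [Finset.mem_Icc] at ht
        apply hcq
        omega)] at hcolc
    have hIeq : Finset.Icc (-(m + 1 : ℤ)) ((k : ℤ) - 1)
        = Finset.Icc (-(m + 1 : ℤ)) (-(m + 1 : ℤ) + ((k + m + 1 : ℕ) : ℤ) - 1) := by
      congr 1
      push_cast
      ring
    rw [hIeq, prod_Icc_int', Nat.add_assoc k m 1,
      Finset.prod_range_add (fun i : ℕ => ‖δ (fun j => c (-(m + 1 : ℤ) + (i : ℤ) + (j : ℤ)))‖)
        k (m + 1)] at hcolc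
    have h2 : ∀ x ∈ Finset.range (m + 1),
        ‖δ (fun j : Fin (m + 2) => c (-(m + 1 : ℤ) + ((k + x : ℕ) : ℤ) + (j : ℤ)))‖ = 1 := by
      intro x hx
      rw [Finset.mem_range] at hx
      have hwin : (fun j : Fin (m + 2) => c (-(m + 1 : ℤ) + ((k + x : ℕ) : ℤ) + (j : ℤ)))
          = fun _ => q := by
        funext j
        have hj := j.isLt
        exact hctail _ (by push_cast; omega)
      rw [hwin, norm_delta_q' q m δ hq]
    rw [Finset.prod_eq_one h2, mul_one,
      ← Fin.prod_univ_eq_prod_range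
        (fun i : ℕ => ‖δ (fun j => c (-(m + 1 : ℤ) + (i : ℤ) + (j : ℤ)))‖) k] at hcolc
    refine Eq.trans (Finset.prod_congr rfl fun i _ => ?_) hcolc
    refine congrArg (fun w => ‖δ w‖) ?_
    funext j
    induction j using Fin.lastCases with
    | last =>
        rw [Fin.snoc_last]
        have hi := i.isLt
        have h5 : p i.succ (Fin.last m) = c (i : ℤ) := by
          rw [hcval (i : ℤ) ⟨Int.natCast_nonneg _, by exact_mod_cast hi⟩]
          congr 1
        rw [h5]
        show c _ = c _
        congr 1
        simp only [Fin.val_last]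
        omega
    | cast j' =>
        rw [Fin.snoc_castSucc, hform i.castSucc j']
        show c _ = c _
        congr 1
        simp only [Fin.coe_castSucc]
        omega
  · -- cycles have weight one ⇒ unit columns
    intro hcyc c
    set N : ℕ := ((c.2.toFinset).image Int.natAbs).sup id with hN
    have hNb : ∀ t : ℤ, (t < -(N : ℤ) ∨ (N : ℤ) < t) → c.1 t = q := by
      intro t ht
      by_contra h
      have h1 : t ∈ c.2.toFinset := (Set.Finite.mem_toFinset _).2 h
      have h2 : t.natAbs ≤ N := Finset.le_sup (f := id) (Finset.mem_image_of_mem _ h1)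
      omega
    set k : ℕ := 2 * N + m + 2 with hk
    set a : ℤ := -(N : ℤ) - (m + 1) with ha
    set p : Fin (k + 1) → Fin (m + 1) → S :=
      fun i j => c.1 ((i : ℤ) + (j : ℤ) - (m + 1) - N) with hp
    have hcy := hcyc k p (by omega)
      (by
        funext j
        have hj := j.isLt
        show c.1 (((0 : Fin (k + 1)) : ℤ) + (j : ℤ) - (m + 1) - N) = q
        apply hNb
        left
        simp only [Fin.val_zero]
        omega)
      (by
        funext j
        have hj := j.isLt
        show c.1 (((Fin.last k : Fin (k + 1)) : ℤ) + (j : ℤ) - (m + 1) - N) = q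
        apply hNb
        right
        simp only [Fin.val_last]
        omega)
      (by
        intro i j
        show c.1 _ = c.1 _
        congr 1
        simp only [Fin.val_succ, Fin.coe_castSucc]
        push_cast
        ring)
    rw [column_norm' q m δ hq c.1 (Finset.Icc a (a + (k : ℤ) - 1))
      (by
        intro t ht j
        have hj := j.isLt
        rw [Finset.mem_Icc] at ht
        apply hNb
        omega)]
    rw [prod_Icc_int',
      ← Fin.prod_univ_eq_prod_range (fun i : ℕ => ‖δ (fun j => c.1 (a + (i : ℤ) + (j : ℤ)))‖) k]
    refine Eq.trans (Finset.prod_congr rfl fun i _ => ?_) hcy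
    refine congrArg (fun w => ‖δ w‖) ?_
    funext j
    induction j using Fin.lastCases with
    | last =>
        rw [Fin.snoc_last]
        show c.1 _ = c.1 _
        refine congrArg _ ?_
        simp only [Fin.val_last, Fin.val_succ]
        omega
    | cast j' =>
        rw [Fin.snoc_castSucc]
        show c.1 _ = c.1 _
        refine congrArg _ ?_
        simp only [Fin.coe_castSucc]
        omega
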